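/- Let n ≥ 1 be an integer and let a be a real number with 0 < a < 1. There is a constant C = C(a, n) such that for all j ≥ 1 and all r_l with 0 < 2^j r_l ≤ 2^{−100}, one has 2^j r_l · ∫_{r_l}^{2^{−j} − r_l} 2^{nj} r^{n−1} (1 − 2^j r)^{a−2} dr ≤ C (2^j r_l)^{a}. -/

import Mathlib

open Real intervalIntegral

theorem stmt_8 (n : ℕ) (hn : 1 ≤ n) (a : ℝ) (ha : 0 < a) (ha' : a < 1) :
    ∃ C : ℝ, 0 < C ∧ ∀ j : ℕ, 1 ≤ j → ∀ rl : ℝ, 0 < rl →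
      (2 : ℝ) ^ j * rl ≤ (2 : ℝ) ^ (-100 : ℤ) →
      (2 : ℝ) ^ j * rl *
          ∫ r in rl..(((2 : ℝ) ^ j)⁻¹ - rl),
            (2 : ℝ) ^ (n * j) * r ^ (n - 1) * (1 - (2 : ℝ) ^ j * r) ^ (a - 2)
        ≤ C * ((2 : ℝ) ^ j * rl) ^ a := by
  have ha1 : (0:ℝ) < 1 - a := by linarith
  refine ⟨1 / (1 - a), by positivity, ?_⟩
  intro j hj rl hrl hsmall
  set c : ℝ := (2:ℝ)^j with hc
  have hc0 : 0 < c := by positivity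
  set t : ℝ := c * rl with htdef
  have ht0 : 0 < t := mul_pos hc0 hrl
  have ht2 : t ≤ 1/2 := by
    refine hsmall.trans ?_
    have : ((2:ℝ))^(-100:ℤ) ≤ (2:ℝ)^(-1:ℤ) := by
      apply zpow_le_zpow_right₀ (by norm_num) (by norm_num)
    simpa using this.trans_eq (by norm_num)
  set u : ℝ := c⁻¹ - rl with hu
  have hrlc : rl ≤ c⁻¹ / 2 := by
    have h := mul_le_mul_of_nonneg_left ht2 (inv_nonneg.mpr hc0.le)
    rw [htdef, ← mul_assoc, inv_mul_cancel₀ hc0.ne', one_mul] at h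
    have : c⁻¹ * (1/2) = c⁻¹ / 2 := by ring
    linarith
  have hru : rl ≤ u := by
    rw [hu]
    have h2 : c⁻¹ / 2 + c⁻¹ / 2 = c⁻¹ := by ring
    linarith
  have hcu : c * u = 1 - t := by
    rw [hu, mul_sub, mul_inv_cancel₀ hc0.ne', htdef]
  have hpos : ∀ r ∈ Set.Icc rl u, 0 < 1 - c * r := by
    intro r hr
    have : c * r ≤ c * u := by gcongr; exact hr.2
    rw [hcu] at this
    linarith
  set g : ℝ → ℝ := fun r => c * (1 - c * r) ^ (a - 2) with hg
  set f : ℝ → ℝ := fun r => (2:ℝ) ^ (n * j) * r ^ (n - 1) * (1 - c * r) ^ (a - 2) with hf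
  have hcn : (2:ℝ) ^ (n * j) = c ^ n := by rw [hc, ← pow_mul, mul_comm]
  have hfg : ∀ r ∈ Set.Icc rl u, f r ≤ g r := by
    intro r hr
    have hr0 : (0:ℝ) ≤ r := hrl.le.trans hr.1
    have hrc : r ≤ c⁻¹ := hr.2.trans (by rw [hu]; linarith)
    have hpow : r ^ (n - 1) ≤ (c⁻¹) ^ (n - 1) := pow_le_pow_left₀ hr0 hrc _
    have hkey : (2:ℝ) ^ (n * j) * r ^ (n - 1) ≤ c := by
      calc (2:ℝ) ^ (n * j) * r ^ (n - 1) ≤ c ^ n * (c⁻¹) ^ (n - 1) := by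
            rw [hcn]; gcongr
      _ = c := by
            rw [inv_pow, ← pow_sub₀ c hc0.ne' (Nat.sub_le n 1),
              Nat.sub_sub_self hn, pow_one]
    have hb : (0:ℝ) ≤ (1 - c * r) ^ (a - 2) := rpow_nonneg (hpos r hr).le _
    exact mul_le_mul_of_nonneg_right hkey hb
  have hcontg : ContinuousOn g (Set.Icc rl u) := by
    apply ContinuousOn.mul continuousOn_const
    exact (continuousOn_const.sub ((continuous_const.mul continuous_id).continuousOn)).rpow_const
      (fun x hx => Or.inl (hpos x hx).ne')
  have hcontf : ContinuousOn f (Set.Icc rl u) := by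
    apply ContinuousOn.mul
    · exact (continuousOn_const.mul (continuousOn_pow _))
    · exact (continuousOn_const.sub ((continuous_const.mul continuous_id).continuousOn)).rpow_const
        (fun x hx => Or.inl (hpos x hx).ne')
  have hintf : IntervalIntegrable f MeasureTheory.volume rl u := by
    apply ContinuousOn.intervalIntegrable
    rw [Set.uIcc_of_le hru]; exact hcontf
  have hintg : IntervalIntegrable g MeasureTheory.volume rl u := by
    apply ContinuousOn.intervalIntegrable
    rw [Set.uIcc_of_le hru]; exact hcontg
  have hmono : (∫ r in rl..u, f r) ≤ ∫ r in rl..u, g r :=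
    intervalIntegral.integral_mono_on hru hintf hintg hfg
  set F : ℝ → ℝ := fun r => (1 - c * r) ^ (a - 1) / (1 - a) with hF
  have hne : a - 1 ≠ 0 := by intro h; linarith
  have hne' : (1:ℝ) - a ≠ 0 := ha1.ne'
  have hderiv : ∀ r ∈ Set.uIcc rl u, HasDerivAt F (g r) r := by
    intro r hr
    rw [Set.uIcc_of_le hru] at hr
    have h1 : HasDerivAt (fun r : ℝ => 1 - c * r) (-c) r := by
      simpa using ((hasDerivAt_id r).const_mul c).const_sub 1
    have h2 := h1.rpow_const (p := a - 1) (Or.inl (hpos r hr).ne')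
    have h3 := h2.div_const (1 - a)
    refine h3.congr_deriv ?_
    symm
    rw [hg, show a - 1 - 1 = a - 2 by ring]
    field_simp
    ring
  have hcomp : (∫ r in rl..u, g r) = F u - F rl :=
    intervalIntegral.integral_eq_sub_of_hasDerivAt hderiv hintg
  have h1 : 1 - c * u = t := by rw [hcu]; ring
  have h2 : (1:ℝ) - c * rl = 1 - t := by rw [htdef]
  have hFu : F u - F rl = (t ^ (a - 1) - (1 - t) ^ (a - 1)) / (1 - a) := by
    simp only [hF]
    rw [h1, h2]
    ring
  have hbound : (∫ r in rl..u, g r) ≤ t ^ (a - 1) / (1 - a) := by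
    rw [hcomp, hFu]
    have hX : (0:ℝ) ≤ (1 - t) ^ (a - 1) := rpow_nonneg (by linarith) _
    gcongr
    linarith
  calc c * rl * ∫ r in rl..u, f r ≤ t * (t ^ (a - 1) / (1 - a)) := by
        rw [← htdef]
        exact mul_le_mul_of_nonneg_left (hmono.trans hbound) ht0.le
  _ = 1 / (1 - a) * t ^ a := by
        rw [show t * (t ^ (a-1) / (1-a)) = (t * t ^ (a-1)) / (1-a) by ring]
        rw [show t * t ^ (a-1) = t ^ (1:ℝ) * t ^ (a-1) by rw [rpow_one]]
        rw [← rpow_add ht0, show (1:ℝ) + (a-1) = a by ring]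
        ring
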